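/- For each x in (0, π/2), the function q ↦ sin(x)/x − 2/π − (2/(qπ))(1 − (2x/π)^q) is strictly increasing in q on (0, ∞). -/

import Mathlib

open Real

theorem strat_B (x : ℝ) (hx : x ∈ Set.Ioo 0 (π/2)) :
    StrictMonoOn (fun q : ℝ => Real.sin x / x - 2/π - 2/(q*π) * (1 - (2*x/π) ^ q))
      (Set.Ioi 0) := by
  obtain ⟨hx0, hx2⟩ := hx
  have hπ : (0:ℝ) < π := Real.pi_pos
  set t : ℝ := 2*x/π with htdef
  have ht0 : 0 < t := by positivity
  have ht1 : t < 1 := by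
    rw [htdef, div_lt_one hπ]; linarith
  have hlt : Real.log t < 0 := Real.log_neg ht0 ht1
  intro p hp q hq hpq
  simp only [Set.mem_Ioi] at hp hq
  have hqne : q ≠ 0 := ne_of_gt hq
  -- key inequality from strict convexity of exp
  have hkey : p * (1 - t ^ q) < q * (1 - t ^ p) := by
    have hane : q * Real.log t ≠ 0 :=
      ne_of_lt (mul_neg_of_pos_of_neg hq hlt)
    have hw1 : (0:ℝ) < p / q := by positivity
    have hw2 : (0:ℝ) < 1 - p / q := by
      have : p / q < 1 := (div_lt_one hq).mpr hpq
      linarith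
    have hconv := strictConvexOn_exp.2 (Set.mem_univ (q * Real.log t))
      (Set.mem_univ (0:ℝ)) hane hw1 hw2 (by ring)
    simp only [smul_eq_mul, mul_zero, add_zero, Real.exp_zero] at hconv
    have e1 : p / q * (q * Real.log t) = p * Real.log t := by
      field_simp
    rw [e1] at hconv
    have e2 : Real.exp (p * Real.log t) = t ^ p := by
      rw [Real.rpow_def_of_pos ht0]; ring_nf
    have e3 : Real.exp (q * Real.log t) = t ^ q := by
      rw [Real.rpow_def_of_pos ht0]; ring_nf
    rw [e2, e3] at hconv
    -- hconv : t ^ p < p / q * t ^ q + (1 - p / q)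
    have := mul_lt_mul_of_pos_left hconv hq
    have hq1 : q * (p / q * t ^ q + (1 - p / q) * 1) = p * t ^ q + (q - p) := by
      field_simp
    rw [hq1] at this
    nlinarith [this]
  have h1 : 2/(q*π)*(1-t^q) < 2/(p*π)*(1-t^p) := by
    rw [div_mul_eq_mul_div, div_mul_eq_mul_div,
      div_lt_div_iff₀ (by positivity) (by positivity)]
    nlinarith [mul_lt_mul_of_pos_right hkey (by positivity : (0:ℝ) < 2*π)]
  simp only []
  linarith [h1]
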